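/- For any real ρ ∉ {0,1} and any n×n real symmetric matrix L, the equation L = D(M) − ρM has a unique solution M among n×n real symmetric matrices, where D(M) is the diagonal matrix of row sums of M. -/

import Mathlib

open Matrix

noncomputable def rsd {n : ℕ} (M : Matrix (Fin n) (Fin n) ℝ) : Matrix (Fin n) (Fin n) ℝ :=
  Matrix.diagonal (fun i => ∑ j, M i j)

theorem stmt14 {n : ℕ} (ρ : ℝ) (hρ0 : ρ ≠ 0) (hρ1 : ρ ≠ 1)
    (L : Matrix (Fin n) (Fin n) ℝ) (hL : L.IsSymm) :
    ∃! M : Matrix (Fin n) (Fin n) ℝ, M.IsSymm ∧ rsd M - ρ • M = L := by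
  have h1ρ : (1 : ℝ) - ρ ≠ 0 := sub_ne_zero.mpr (Ne.symm hρ1)
  set d : Fin n → ℝ := fun i => (L i i + (∑ j, L i j - L i i) / ρ) / (1 - ρ) with hd
  -- key: characterize all solutions
  have key : ∀ N : Matrix (Fin n) (Fin n) ℝ, (N.IsSymm ∧ rsd N - ρ • N = L) ↔
      (∀ i j, N i j = if i = j then d i else -L i j / ρ) := by
    intro N
    constructor
    · rintro ⟨-, hN⟩ i j
      by_cases hij : i = j
      · subst hij
        simp only [if_pos rfl, hd]
        have h1 := congrFun (congrFun hN i) i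
        simp only [rsd, Matrix.sub_apply, Matrix.smul_apply, Matrix.diagonal_apply_eq,
          smul_eq_mul] at h1
        have hoff : ∀ k, k ≠ i → N i k = -L i k / ρ := by
          intro k hk
          have h2 := congrFun (congrFun hN i) k
          simp only [rsd, Matrix.sub_apply, Matrix.smul_apply, smul_eq_mul,
            Matrix.diagonal_apply_ne' _ hk] at h2
          field_simp
          linarith
        have hsum : ∑ k, N i k = N i i + ∑ k ∈ Finset.univ.erase i, (-L i k / ρ) := by
          rw [← Finset.add_sum_erase _ _ (Finset.mem_univ i)]
          congr 1
          exact Finset.sum_congr rfl fun k hk => hoff k (Finset.ne_of_mem_erase hk)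
        have herase : ∑ k ∈ Finset.univ.erase i, L i k = ∑ k, L i k - L i i :=
          Finset.sum_erase_eq_sub (Finset.mem_univ i)
        rw [hsum] at h1
        have : ∑ k ∈ Finset.univ.erase i, (-L i k / ρ) = -(∑ k, L i k - L i i) / ρ := by
          rw [← herase, ← Finset.sum_div, ← Finset.sum_neg_distrib]
        rw [this] at h1
        field_simp at h1 ⊢
        rw [if_pos trivial, eq_div_iff (mul_ne_zero hρ0 h1ρ)]
        linear_combination h1
      · have h2 := congrFun (congrFun hN i) j
        simp only [rsd, Matrix.sub_apply, Matrix.smul_apply, smul_eq_mul,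
          Matrix.diagonal_apply_ne _ hij] at h2
        rw [if_neg hij]
        field_simp
        linarith
    · intro h
      constructor
      · ext i j
        simp only [Matrix.transpose_apply, h]
        by_cases hij : j = i
        · subst hij; rfl
        · rw [if_neg hij, if_neg (Ne.symm hij), hL.apply]
      · ext i j
        by_cases hij : i = j
        · subst hij
          simp only [rsd, Matrix.sub_apply, Matrix.smul_apply, Matrix.diagonal_apply_eq,
            smul_eq_mul]
          have hsum : ∑ k, N i k = N i i + ∑ k ∈ Finset.univ.erase i, (-L i k / ρ) := by
            rw [← Finset.add_sum_erase _ _ (Finset.mem_univ i)]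
            congr 1
            refine Finset.sum_congr rfl fun k hk => ?_
            rw [h i k, if_neg (Ne.symm (Finset.ne_of_mem_erase hk))]
          have herase : ∑ k ∈ Finset.univ.erase i, L i k = ∑ k, L i k - L i i :=
            Finset.sum_erase_eq_sub (Finset.mem_univ i)
          have : ∑ k ∈ Finset.univ.erase i, (-L i k / ρ) = -(∑ k, L i k - L i i) / ρ := by
            rw [← herase, ← Finset.sum_div, ← Finset.sum_neg_distrib]
          rw [hsum, this, h i i, if_pos rfl, hd]
          field_simp
          ring
        · simp only [rsd, Matrix.sub_apply, Matrix.smul_apply, smul_eq_mul,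
            Matrix.diagonal_apply_ne _ hij, h i j, if_neg hij]
          field_simp
          ring
  refine ⟨fun i j => if i = j then d i else -L i j / ρ, (key _).mpr fun i j => rfl, ?_⟩
  intro N hN
  ext i j
  exact (key N).mp hN i j
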